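/- Let E : ℝ^d → ℝ be continuously differentiable, 0 < T < ∞, u⁰ ∈ ℝ^d, and for v ∈ C¹([0,T]; ℝ^d) with v(0) = u⁰ define F(v) = E(v(T)) − E(u⁰) + (1/2) ∫_0^T |v'(t)|² dt + (1/2) ∫_0^T |∇E(v(t))|² dt. Then F(v) ≥ 0 for every such v, and F(v) = 0 if and only if v'(t) + ∇E(v(t)) = 0 for all t ∈ [0,T]. -/

import Mathlib

/-- De Giorgi Energy-Dissipation principle. For `E ∈ C¹(ℝ^d)`,
`0 < T < ∞`, `a = u⁰ ∈ ℝ^d` and `v ∈ C¹([0,T];ℝ^d)` (derivative `v'`) with `v(0) = u⁰`,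
the functional
`F(v) = E(v(T)) − E(u⁰) + (1/2)∫_0^T |v'|² + (1/2)∫_0^T |∇E(v)|²`
satisfies `F(v) ≥ 0`, with `F(v) = 0` iff `v' + ∇E(v) = 0` on `[0,T]`. -/
theorem de_giorgi_principle (d : ℕ) (T : ℝ) (hT : 0 < T)
    (E : EuclideanSpace ℝ (Fin d) → ℝ) (hE : ContDiff ℝ 1 E)
    (a : EuclideanSpace ℝ (Fin d))
    (v v' : ℝ → EuclideanSpace ℝ (Fin d))
    (hv1 : ∀ t ∈ Set.Icc (0 : ℝ) T, HasDerivWithinAt v (v' t) (Set.Icc 0 T) t)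
    (hv1c : ContinuousOn v' (Set.Icc 0 T))
    (hv0 : v 0 = a) :
    0 ≤ E (v T) - E a + (1 / 2) * (∫ t in (0 : ℝ)..T, ‖v' t‖ ^ 2)
        + (1 / 2) * (∫ t in (0 : ℝ)..T, ‖gradient E (v t)‖ ^ 2)
      ∧ (E (v T) - E a + (1 / 2) * (∫ t in (0 : ℝ)..T, ‖v' t‖ ^ 2)
            + (1 / 2) * (∫ t in (0 : ℝ)..T, ‖gradient E (v t)‖ ^ 2) = 0
          ↔ ∀ t ∈ Set.Icc (0 : ℝ) T, v' t + gradient E (v t) = 0) := by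
  set G : ℝ → EuclideanSpace ℝ (Fin d) := fun t => gradient E (v t) with hGdef
  have hvc : ContinuousOn v (Set.Icc 0 T) := fun t ht => (hv1 t ht).continuousWithinAt
  have hEd : Differentiable ℝ E := hE.differentiable one_ne_zero
  have hgradc : Continuous (gradient E) := by
    have hgr : gradient E = fun x =>
        (InnerProductSpace.toDual ℝ (EuclideanSpace ℝ (Fin d))).symm (fderiv ℝ E x) := rfl
    rw [hgr]
    exact (LinearIsometryEquiv.continuous _).comp (hE.continuous_fderiv one_ne_zero)
  have hGc : ContinuousOn G (Set.Icc 0 T) := hgradc.comp_continuousOn hvc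
  have huIcc : Set.uIcc (0 : ℝ) T = Set.Icc 0 T := Set.uIcc_of_le hT.le
  -- chain rule
  have key : ∀ t ∈ Set.Icc (0 : ℝ) T, HasDerivWithinAt (fun s => E (v s))
      ((inner ℝ (G t) (v' t) : ℝ)) (Set.Icc 0 T) t := by
    intro t ht
    have h1 : HasFDerivAt E ((InnerProductSpace.toDual ℝ _) (G t)) (v t) :=
      ((hEd (v t)).hasGradientAt).hasFDerivAt
    have := h1.comp_hasDerivWithinAt t (hv1 t ht)
    simp only [InnerProductSpace.toDual_apply_apply] at this
    exact this
  -- integrabilities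
  have hAint : IntervalIntegrable (fun t => ‖v' t‖ ^ 2) MeasureTheory.volume 0 T :=
    ContinuousOn.intervalIntegrable (by rw [huIcc]; exact hv1c.norm.pow 2)
  have hBint : IntervalIntegrable (fun t => ‖G t‖ ^ 2) MeasureTheory.volume 0 T :=
    ContinuousOn.intervalIntegrable (by rw [huIcc]; exact hGc.norm.pow 2)
  have hIc : ContinuousOn (fun t => (inner ℝ (G t) (v' t) : ℝ)) (Set.Icc 0 T) :=
    hGc.inner hv1c
  have hIint : IntervalIntegrable (fun t => (inner ℝ (G t) (v' t) : ℝ))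
      MeasureTheory.volume 0 T :=
    ContinuousOn.intervalIntegrable (by rw [huIcc]; exact hIc)
  -- FTC
  have hftc : (∫ t in (0 : ℝ)..T, (inner ℝ (G t) (v' t) : ℝ)) = E (v T) - E (v 0) := by
    apply intervalIntegral.integral_eq_sub_of_hasDeriv_right_of_le hT.le
    · exact hE.continuous.comp_continuousOn hvc
    · intro t ht
      exact ((key t (Set.Ioo_subset_Icc_self ht)).hasDerivAt
        (Icc_mem_nhds ht.1 ht.2)).hasDerivWithinAt
    · exact hIint
  -- pointwise expansion
  have hexp : ∀ t, ‖v' t + G t‖ ^ 2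
      = ‖v' t‖ ^ 2 + 2 * (inner ℝ (G t) (v' t) : ℝ) + ‖G t‖ ^ 2 := by
    intro t
    rw [real_inner_comm]
    simpa using norm_add_sq_real (v' t) (G t)
  -- rewrite functional
  have hmain : E (v T) - E a + (1 / 2) * (∫ t in (0 : ℝ)..T, ‖v' t‖ ^ 2)
      + (1 / 2) * (∫ t in (0 : ℝ)..T, ‖G t‖ ^ 2)
      = (1 / 2) * ∫ t in (0 : ℝ)..T, ‖v' t + G t‖ ^ 2 := by
    have h1 : (∫ t in (0 : ℝ)..T, ‖v' t + G t‖ ^ 2)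
        = (∫ t in (0 : ℝ)..T, (‖v' t‖ ^ 2 + 2 * (inner ℝ (G t) (v' t) : ℝ)))
          + ∫ t in (0 : ℝ)..T, ‖G t‖ ^ 2 := by
      rw [← intervalIntegral.integral_add (hAint.add (hIint.const_mul 2)) hBint]
      apply intervalIntegral.integral_congr
      intro t _
      simpa using hexp t
    have h2 : (∫ t in (0 : ℝ)..T, (‖v' t‖ ^ 2 + 2 * (inner ℝ (G t) (v' t) : ℝ)))
        = (∫ t in (0 : ℝ)..T, ‖v' t‖ ^ 2)
          + 2 * ∫ t in (0 : ℝ)..T, (inner ℝ (G t) (v' t) : ℝ) := by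
      rw [intervalIntegral.integral_add hAint (hIint.const_mul 2),
        intervalIntegral.integral_const_mul]
    rw [h1, h2, hftc, hv0]
    ring
  constructor
  · rw [hmain]
    have : 0 ≤ ∫ t in (0 : ℝ)..T, ‖v' t + G t‖ ^ 2 :=
      intervalIntegral.integral_nonneg hT.le (fun t _ => by positivity)
    linarith
  · rw [hmain]
    constructor
    · intro h0 t ht
      by_contra hne
      have hpos : 0 < ∫ t in (0 : ℝ)..T, ‖v' t + G t‖ ^ 2 := by
        apply intervalIntegral.integral_pos hT
        · exact ((hv1c.add hGc).norm.pow 2)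
        · exact fun x _ => by positivity
        · exact ⟨t, ht, pow_pos (norm_pos_iff.mpr hne) 2⟩
      linarith
    · intro hz
      have : (∫ t in (0 : ℝ)..T, ‖v' t + G t‖ ^ 2) = ∫ t in (0 : ℝ)..T, (0 : ℝ) := by
        apply intervalIntegral.integral_congr
        intro t ht
        rw [huIcc] at ht
        simp [hGdef, hz t ht]
      rw [this]
      simp
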